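/- Let φ: R → S be a homomorphism of commutative rings where R is Noetherian, L a finitely generated R-module, and M an S-module that is flat as an R-module. Then sK_S(L ⊗_R M) = ⋃_{p ∈ Ass_R(L)} sK_S(M/pM). -/

import Mathlib

open TensorProduct

/-- `p` is a strong Krull prime of the `R`-module `M`. -/
def IsStrongKrullPrime (R : Type*) [CommRing R] (M : Type*) [AddCommGroup M] [Module R M]
    (p : Ideal R) : Prop :=
  p.IsPrime ∧ ∀ I : Ideal R, I.FG → I ≤ p →
    ∃ z : M, I ≤ LinearMap.ker (LinearMap.toSpanSingleton R M z) ∧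
      LinearMap.ker (LinearMap.toSpanSingleton R M z) ≤ p

namespace SKPAux

variable {S : Type*} [CommRing S]

/-- The annihilator ideal of an element. -/
abbrev ann (S : Type*) [CommRing S] {N : Type*} [AddCommGroup N] [Module S N] (z : N) :
    Ideal S := LinearMap.ker (LinearMap.toSpanSingleton S N z)

lemma mem_ann_iff {N : Type*} [AddCommGroup N] [Module S N] {z : N} {s : S} :
    s ∈ ann S z ↔ s • z = 0 := by
  simp [ann, LinearMap.mem_ker]

lemma ann_le_ann_map {N N' : Type*} [AddCommGroup N] [Module S N] [AddCommGroup N']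
    [Module S N'] (f : N →ₗ[S] N') (z : N) : ann S z ≤ ann S (f z) := by
  intro s hs
  rw [mem_ann_iff] at hs ⊢
  rw [← map_smul, hs, map_zero]

lemma ann_map_eq_of_injective {N N' : Type*} [AddCommGroup N] [Module S N] [AddCommGroup N']
    [Module S N'] (f : N →ₗ[S] N') (hf : Function.Injective f) (z : N) :
    ann S (f z) = ann S z := by
  refine le_antisymm (fun s hs => ?_) (ann_le_ann_map f z)
  rw [mem_ann_iff] at hs ⊢
  apply hf
  rw [map_smul, hs, map_zero]

/-- A strong Krull prime transfers along injective maps. -/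
lemma isStrongKrullPrime_of_injective {N N' : Type*} [AddCommGroup N] [Module S N]
    [AddCommGroup N'] [Module S N'] (f : N →ₗ[S] N') (hf : Function.Injective f) {Q : Ideal S}
    (h : IsStrongKrullPrime S N Q) : IsStrongKrullPrime S N' Q := by
  refine ⟨h.1, fun I hIfg hIQ => ?_⟩
  obtain ⟨z, h1, h2⟩ := h.2 I hIfg hIQ
  exact ⟨f z, by rw [show LinearMap.ker (LinearMap.toSpanSingleton S N' (f z)) = ann S (f z)
    from rfl, ann_map_eq_of_injective f hf z]; exact ⟨h1, h2⟩⟩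

/-- If a finite intersection of ideals is contained in a prime, one of them is. -/
lemma exists_le_prime_of_forall {ι : Type*} [Fintype ι] {Q : Ideal S} (hQ : Q.IsPrime)
    (I : ι → Ideal S) (h : ∀ x : S, (∀ i, x ∈ I i) → x ∈ Q) : ∃ i, I i ≤ Q := by
  classical
  by_contra hc
  push_neg at hc
  choose x hxI hxQ using fun i => SetLike.not_le_iff_exists.1 (hc i)
  have hP : (∏ i, x i) ∈ Q := by
    refine h _ fun i => ?_
    rw [← Finset.mul_prod_erase Finset.univ x (Finset.mem_univ i)]
    exact Ideal.mul_mem_right _ _ (hxI i)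
  obtain ⟨i, -, hi⟩ := (Ideal.IsPrime.prod_mem_iff (hp := hQ)).1 hP
  exact hxQ i hi

section Domain

variable {D V : Type*} [CommRing D] [IsDomain D] [AddCommGroup V] [Module D V]

/-- A finitely generated torsion-free module over a domain embeds into a finite free module. -/
lemma exists_embedding_into_free [Module.Finite D V] [NoZeroSMulDivisors D V] :
    ∃ (n : ℕ) (θ : V →ₗ[D] (Fin n → D)), Function.Injective θ := by
  classical
  obtain ⟨m, v, hv⟩ := Module.Finite.exists_fin (R := D) (M := V)
  obtain ⟨I, hI_ind, hI_max⟩ := exists_maximal_linearIndepOn D v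
  haveI : Fintype ↥I := (Set.toFinite I).fintype
  set F := Submodule.span D (Set.range fun x : ↥I => v ↑x) with hF
  have hrange : (Set.range fun x : ↥I => v ↑x) = v '' I := (Set.image_eq_range v I).symm
  have hd : ∀ i : Fin m, ∃ d : D, d ≠ 0 ∧ d • v i ∈ F := by
    intro i
    by_cases hi : i ∈ I
    · exact ⟨1, one_ne_zero, by rw [one_smul]; exact Submodule.subset_span ⟨⟨i, hi⟩, rfl⟩⟩
    · obtain ⟨a, ha, hmem⟩ := hI_max i hi
      exact ⟨a, ha, by rw [hF, hrange]; exact hmem⟩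
  choose d hd0 hdF using hd
  set dd := ∏ i, d i with hdd
  have hdd0 : dd ≠ 0 := Finset.prod_ne_zero_iff.2 fun i _ => hd0 i
  have hsmul : ∀ x : V, dd • x ∈ F := by
    intro x
    have hx : x ∈ Submodule.span D (Set.range v) := by rw [hv]; trivial
    induction hx using Submodule.span_induction with
    | mem y hy =>
      obtain ⟨i, rfl⟩ := hy
      rw [hdd, ← Finset.mul_prod_erase Finset.univ d (Finset.mem_univ i), mul_comm, mul_smul]
      exact F.smul_mem _ (hdF i)
    | zero => simp
    | add y z _ _ hy hz => rw [smul_add]; exact F.add_mem hy hz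
    | smul c y _ hy => rw [smul_comm]; exact F.smul_mem _ hy
  set ℓ : V →ₗ[D] ↥F := LinearMap.codRestrict F (LinearMap.lsmul D V dd) hsmul with hℓdef
  have hℓ : Function.Injective ℓ := by
    intro a b hab
    have h1 : dd • a = dd • b := congrArg Subtype.val hab
    exact smul_right_injective V hdd0 h1
  set e1 := (Module.Basis.span hI_ind).repr
  set e2 := Finsupp.linearEquivFunOnFinite D D ↥I
  set e3 := LinearEquiv.funCongrLeft D D (Fintype.equivFin ↥I).symm
  refine ⟨Fintype.card ↥I, e3.toLinearMap ∘ₗ e2.toLinearMap ∘ₗ e1.toLinearMap ∘ₗ ℓ, ?_⟩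
  simp only [LinearMap.coe_comp, LinearEquiv.coe_coe]
  exact e3.injective.comp (e2.injective.comp (e1.injective.comp hℓ))

end Domain

section Noetherian

variable {R : Type*} [CommRing R] [IsNoetherianRing R]

/-- If an element lies in every associated prime of a Noetherian module,
then some power of it kills the module. -/
lemma exists_pow_smul_eq_zero (X : Type*) [AddCommGroup X] [Module R X] [Module.Finite R X]
    (a : R) (ha : ∀ q ∈ associatedPrimes R X, a ∈ q) : ∃ k : ℕ, ∀ x : X, a ^ k • x = 0 := by
  haveI : IsNoetherian R X := isNoetherian_of_isNoetherianRing_of_finite R X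
  have hmono : Monotone fun k : ℕ => LinearMap.ker ((a ^ k) • (LinearMap.id : X →ₗ[R] X)) := by
    apply monotone_nat_of_le_succ
    intro k x hx
    simp only [LinearMap.mem_ker, LinearMap.smul_apply, LinearMap.id_coe, id_eq] at hx ⊢
    rw [pow_succ', mul_smul, hx, smul_zero]
  obtain ⟨k, hk⟩ := monotone_stabilizes_iff_noetherian.mpr ‹IsNoetherian R X›
    ⟨fun k => LinearMap.ker ((a ^ k) • (LinearMap.id : X →ₗ[R] X)), hmono⟩
  refine ⟨k, ?_⟩
  by_contra hcon
  push_neg at hcon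
  obtain ⟨x₀, hx₀⟩ := hcon
  set W := LinearMap.range ((a ^ k) • (LinearMap.id : X →ₗ[R] X)) with hW
  haveI : Nontrivial ↥W := by
    refine Submodule.nontrivial_iff_ne_bot.mpr fun hbot => hx₀ ?_
    have : a ^ k • x₀ ∈ W := ⟨x₀, by simp⟩
    rw [hbot] at this
    simpa using this
  obtain ⟨q, hq⟩ := associatedPrimes.nonempty R ↥W
  have haq : a ∈ q := ha q (associatedPrimes.subset_of_injective
    (Submodule.injective_subtype W) hq)
  obtain ⟨hqprime, u, hu⟩ := isAssociatedPrime_iff.1 hq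
  rw [Submodule.bot_colon'] at hu
  have hau : a • u = 0 := by
    have := hu ▸ haq
    rwa [Submodule.mem_annihilator_span_singleton] at this
  obtain ⟨x', hx'⟩ := u.2
  have hx'' : a ^ (k + 1) • x' = 0 := by
    have h1 : a • (u : X) = 0 := by
      rw [show (0 : X) = ((0 : ↥W) : X) from rfl, ← hau]; rfl
    simp only [LinearMap.smul_apply, LinearMap.id_coe, id_eq] at hx'
    rw [pow_succ', mul_smul, hx', h1]
  have hmem : x' ∈ LinearMap.ker ((a ^ k) • (LinearMap.id : X →ₗ[R] X)) := by
    have := hk (k + 1) (Nat.le_succ k)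
    have hx3 : x' ∈ LinearMap.ker ((a ^ (k + 1)) • (LinearMap.id : X →ₗ[R] X)) := by
      simpa [LinearMap.mem_ker] using hx''
    rw [show LinearMap.ker ((a ^ k) • (LinearMap.id : X →ₗ[R] X)) =
      (⟨fun k => LinearMap.ker ((a ^ k) • (LinearMap.id : X →ₗ[R] X)), hmono⟩ : ℕ →o _) k
      from rfl, this]
    exact hx3
  have hu0 : (u : X) = 0 := by
    simp only [LinearMap.mem_ker, LinearMap.smul_apply, LinearMap.id_coe, id_eq] at hmem
    rw [← hx']
    simpa using hmem
  have : u = 0 := Subtype.ext hu0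
  rw [this] at hu
  apply hqprime.ne_top
  rw [hu, Submodule.span_singleton_eq_bot.mpr rfl, Submodule.annihilator_bot]

/-- The associated primes of the quotient by an inf-irreducible submodule form a
subsingleton set. -/
lemma assPrimes_subsingleton_of_infIrred {L : Type*} [AddCommGroup L] [Module R L]
    {N : Submodule R L} (hN : InfIrred N) :
    (associatedPrimes R (L ⧸ N)).Subsingleton := by
  intro p hp p' hp'
  by_contra hne
  obtain ⟨hpP, x, hx⟩ := isAssociatedPrime_iff.1 hp
  obtain ⟨hp'P, x', hx'⟩ := isAssociatedPrime_iff.1 hp'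
  rw [Submodule.bot_colon'] at hx hx'
  have hx0 : x ≠ 0 := by
    rintro rfl
    exact hpP.ne_top (by rw [hx, Submodule.span_singleton_eq_bot.mpr rfl,
      Submodule.annihilator_bot])
  have hx'0 : x' ≠ 0 := by
    rintro rfl
    exact hp'P.ne_top (by rw [hx', Submodule.span_singleton_eq_bot.mpr rfl,
      Submodule.annihilator_bot])
  have hinter : (R ∙ x) ⊓ (R ∙ x') = ⊥ := by
    rw [eq_bot_iff]
    rintro y ⟨hy1, hy2⟩
    obtain ⟨c, rfl⟩ := Submodule.mem_span_singleton.1 hy1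
    obtain ⟨c', hc'⟩ := Submodule.mem_span_singleton.1 hy2
    simp only [Submodule.mem_bot]
    by_contra hy0
    have hcp : c ∉ p := by
      intro hc
      apply hy0
      have : c ∈ (R ∙ x).annihilator := hx ▸ hc
      rwa [Submodule.mem_annihilator_span_singleton] at this
    have hc'p' : c' ∉ p' := by
      intro hc
      apply hy0
      have : c' ∈ (R ∙ x').annihilator := hx' ▸ hc
      rw [Submodule.mem_annihilator_span_singleton] at this
      rw [← hc', this]
    -- annihilator of y equals both p and p'
    have hann : ∀ (q : Ideal R) (w : L ⧸ N) (cw : R), q.IsPrime → q = (R ∙ w).annihilator →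
        cw ∉ q → (R ∙ cw • w).annihilator = q := by
      intro q w cw hq hqw hcw
      apply le_antisymm
      · intro b hb
        rw [Submodule.mem_annihilator_span_singleton] at hb
        rw [smul_comm] at hb
        have : b * cw ∈ q := by
          rw [hqw, Submodule.mem_annihilator_span_singleton, mul_smul]
          rw [smul_comm]
          exact hb
        rcases hq.mem_or_mem this with h | h
        · exact h
        · exact absurd h hcw
      · intro b hb
        rw [Submodule.mem_annihilator_span_singleton]
        have : b • w = 0 := by
          have := hqw ▸ hb
          rwa [Submodule.mem_annihilator_span_singleton] at this
        rw [smul_comm, this, smul_zero]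
    have h1 : (R ∙ c • x).annihilator = p := hann p x c hpP hx hcp
    have h2 : (R ∙ c' • x').annihilator = p' := hann p' x' c' hp'P hx' hc'p'
    rw [hc'] at h2
    exact hne (h1 ▸ h2 ▸ rfl)
  -- now contradict irreducibility
  have hcomap : Submodule.comap N.mkQ (R ∙ x) ⊓ Submodule.comap N.mkQ (R ∙ x') = N := by
    rw [← Submodule.comap_inf, hinter]
    simp [Submodule.ker_mkQ]
  rcases hN.2 hcomap with h | h
  · apply hx0
    have := Submodule.map_comap_eq_of_surjective (Submodule.mkQ_surjective N) (R ∙ x)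
    rw [h] at this
    have hbot : Submodule.map N.mkQ N = ⊥ := by
      rw [eq_bot_iff]
      rintro y ⟨w, hw, rfl⟩
      simp only [Submodule.mem_bot, Submodule.mkQ_apply, Submodule.Quotient.mk_eq_zero]
      exact hw
    rw [hbot] at this
    exact Submodule.span_singleton_eq_bot.1 this.symm
  · apply hx'0
    have := Submodule.map_comap_eq_of_surjective (Submodule.mkQ_surjective N) (R ∙ x')
    rw [h] at this
    have hbot : Submodule.map N.mkQ N = ⊥ := by
      rw [eq_bot_iff]
      rintro y ⟨w, hw, rfl⟩
      simp only [Submodule.mem_bot, Submodule.mkQ_apply, Submodule.Quotient.mk_eq_zero]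
      exact hw
    rw [hbot] at this
    exact Submodule.span_singleton_eq_bot.1 this.symm

end Noetherian

section TensorAux

variable {R S : Type*} [CommRing R] [CommRing S] [Algebra R S]
variable {M : Type*} [AddCommGroup M] [Module S M] [Module R M] [IsScalarTower R S M]

/-- The `S`-linear map `M → M ⊗[R] (R ⧸ p)`, `m ↦ m ⊗ 1`. -/
noncomputable def toTensorQuot (M : Type*) [AddCommGroup M] [Module S M] [Module R M] [IsScalarTower R S M]
    (p : Ideal R) : M →ₗ[S] M ⊗[R] (R ⧸ p) where
  toFun m := m ⊗ₜ (1 : R ⧸ p)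
  map_add' m m' := add_tmul m m' 1
  map_smul' s m := by simp [smul_tmul']

lemma toTensorQuot_apply (p : Ideal R) (m : M) :
    toTensorQuot (S := S) M p m = m ⊗ₜ (1 : R ⧸ p) := rfl

lemma toTensorQuot_surjective (p : Ideal R) :
    Function.Surjective (toTensorQuot (S := S) M p) := by
  intro w
  induction w using TensorProduct.induction_on with
  | zero => exact ⟨0, map_zero _⟩
  | tmul m r =>
    obtain ⟨a, rfl⟩ := Ideal.Quotient.mk_surjective r
    refine ⟨a • m, ?_⟩
    rw [toTensorQuot_apply, smul_tmul]
    congr 1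
    rw [Algebra.smul_def, mul_one, Ideal.Quotient.algebraMap_eq]
  | add u v hu hv =>
    obtain ⟨mu, rfl⟩ := hu
    obtain ⟨mv, rfl⟩ := hv
    exact ⟨mu + mv, map_add _ _ _⟩

lemma ker_toTensorQuot (p : Ideal R) :
    LinearMap.ker (toTensorQuot (S := S) M p) =
      p.map (algebraMap R S) • (⊤ : Submodule S M) := by
  apply le_antisymm
  · intro m hm
    rw [LinearMap.mem_ker, toTensorQuot_apply] at hm
    have h0 : (TensorProduct.tensorQuotEquivQuotSMul M p) (m ⊗ₜ (1 : R ⧸ p)) =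
        Submodule.Quotient.mk m := by
      rw [show (1 : R ⧸ p) = Ideal.Quotient.mk p 1 from rfl,
        TensorProduct.tensorQuotEquivQuotSMul_tmul_mk, one_smul]
    rw [hm, map_zero] at h0
    have hmem : m ∈ (p • ⊤ : Submodule R M) := by
      rwa [eq_comm, Submodule.Quotient.mk_eq_zero] at h0
    -- transfer from R-scalar smul to S-scalar smul
    refine Submodule.smul_induction_on hmem (fun r hr n _ => ?_) (fun a b ha hb => ?_)
    · have : r • n = (algebraMap R S r) • n := (algebraMap_smul S r n).symm
      rw [this]
      exact Submodule.smul_mem_smul (Ideal.mem_map_of_mem _ hr) trivial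
    · exact Submodule.add_mem _ ha hb
  · intro x hx
    rw [LinearMap.mem_ker]
    refine Submodule.smul_induction_on hx (fun s hs n _ => ?_) (fun a b ha hb => ?_)
    · -- s ∈ p.map (algebraMap R S)
      have hs' : s ∈ Submodule.span S ((algebraMap R S) '' (p : Set R)) := hs
      clear hs
      induction hs' using Submodule.span_induction with
      | mem y hy =>
        obtain ⟨a, ha, rfl⟩ := hy
        rw [toTensorQuot_apply, algebraMap_smul, smul_tmul]
        have : a • (1 : R ⧸ p) = Ideal.Quotient.mk p a := by
          rw [Algebra.smul_def, mul_one, Ideal.Quotient.algebraMap_eq]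
        rw [this, Ideal.Quotient.eq_zero_iff_mem.mpr ha, tmul_zero]
      | zero => rw [zero_smul, map_zero]
      | add y z _ _ hy hz => rw [add_smul, map_add, hy, hz, add_zero]
      | smul c y _ hy => rw [smul_eq_mul, mul_smul, map_smul, hy, smul_zero]
    · rw [map_add, ha, hb, add_zero]

/-- Annihilator of a class in `M ⧸ (p.map φ • ⊤)` equals that of `m ⊗ 1`. -/
lemma ann_quotient_eq_ann_tensor (p : Ideal R) (m : M) :
    ann S (Submodule.Quotient.mk m : M ⧸ (p.map (algebraMap R S) • (⊤ : Submodule S M))) =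
      ann S (toTensorQuot (S := S) M p m) := by
  ext s
  rw [mem_ann_iff, mem_ann_iff, ← map_smul, ← Submodule.Quotient.mk_smul]
  rw [show (Submodule.Quotient.mk (s • m) :
    M ⧸ (p.map (algebraMap R S) • (⊤ : Submodule S M))) = 0 ↔
    s • m ∈ p.map (algebraMap R S) • (⊤ : Submodule S M) from Submodule.Quotient.mk_eq_zero _,
    ← ker_toTensorQuot (S := S) p, LinearMap.mem_ker, map_smul]

variable [Module.Flat R M]

variable {L : Type*} [AddCommGroup L] [Module R L]

lemma restrictScalars_map_id_eq (X X' : Type*) [AddCommGroup X] [Module R X] [AddCommGroup X']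
    [Module R X'] (g : X →ₗ[R] X') :
    ((AlgebraTensorModule.map (LinearMap.id : M →ₗ[S] M) g).restrictScalars R) =
      LinearMap.lTensor M g :=
  TensorProduct.ext' fun _ _ => rfl

lemma coe_map_id_eq (X X' : Type*) [AddCommGroup X] [Module R X] [AddCommGroup X']
    [Module R X'] (g : X →ₗ[R] X') :
    ⇑(AlgebraTensorModule.map (LinearMap.id : M →ₗ[S] M) g) = ⇑(LinearMap.lTensor M g) := by
  rw [← restrictScalars_map_id_eq (S := S) (M := M) X X' g]
  rfl

/-- Pi-version of flatness injectivity. -/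
lemma eq_zero_of_forall_lTensor {ι : Type*} [Fintype ι] {X : ι → Type*}
    [∀ i, AddCommGroup (X i)] [∀ i, Module R (X i)] (g : ∀ i, L →ₗ[R] X i)
    (hg : (⨅ i, LinearMap.ker (g i)) = ⊥) (v : M ⊗[R] L)
    (hv : ∀ i, LinearMap.lTensor M (g i) v = 0) : v = 0 := by
  classical
  have hG : Function.Injective (LinearMap.pi g : L →ₗ[R] ∀ i, X i) := by
    rw [← LinearMap.ker_eq_bot, LinearMap.ker_pi, hg]
  have h1 : Function.Injective (LinearMap.lTensor M (LinearMap.pi g)) :=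
    Module.Flat.lTensor_preserves_injective_linearMap _ hG
  have h2 : (piRightHom R R M X).comp (LinearMap.lTensor M (LinearMap.pi g)) =
      LinearMap.pi fun i => LinearMap.lTensor M (g i) :=
    TensorProduct.ext' fun m x => by
      ext i
      simp
  have h3 : Function.Injective (piRightHom R R M X) := by
    have heq : ⇑(piRight R R M X) = ⇑(piRightHom R R M X) := funext fun x => piRight_apply R R M X x
    rw [← heq]
    exact (piRight R R M X).injective
  apply h1
  rw [map_zero]
  apply h3
  rw [map_zero]
  have := LinearMap.congr_fun h2 v
  rw [LinearMap.comp_apply] at this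
  rw [this]
  ext i
  simp [hv i]

/-- Any element of the tensor product killed by a finite set of ring elements comes from
the joint kernel. -/
lemma exists_preimage_of_smul_eq_zero (X : Type*) [AddCommGroup X] [Module R X]
    (G : Finset R) (v : M ⊗[R] X) (hv : ∀ a ∈ G, (a : R) • v = 0) :
    ∃ Y : Submodule R X, (∀ a ∈ G, ∀ u : ↥Y, (a : R) • (u : X) = 0) ∧
      ∃ y : M ⊗[R] ↥Y, LinearMap.lTensor M Y.subtype y = v := by
  classical
  set f := LinearMap.pi fun a : ↥G => ((a : R) • LinearMap.id : X →ₗ[R] X) with hf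
  have hexact := Module.Flat.lTensor_exact M (f.exact_subtype_ker_map)
  have hzero : LinearMap.lTensor M f v = 0 := by
    have h2 : (piRightHom R R M fun _ : ↥G => X).comp (LinearMap.lTensor M f) =
        LinearMap.pi fun a : ↥G => ((a : R) • LinearMap.id : M ⊗[R] X →ₗ[R] M ⊗[R] X) :=
      TensorProduct.ext' fun m x => by
        ext a
        simp [hf, tmul_smul]
    have h3 : Function.Injective (piRightHom R R M fun _ : ↥G => X) := by
      have heq : ⇑(piRight R R M fun _ : ↥G => X) = ⇑(piRightHom R R M fun _ : ↥G => X) :=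
        funext fun x => piRight_apply R R M _ x
      rw [← heq]
      exact (piRight R R M _).injective
    apply h3
    rw [map_zero]
    have := LinearMap.congr_fun h2 v
    rw [LinearMap.comp_apply] at this
    rw [this]
    ext a
    simp [hv a a.2]
  refine ⟨LinearMap.ker f, fun a ha u => ?_, (hexact v).mp hzero⟩
  have h0 := congrFun (LinearMap.mem_ker.mp u.2) ⟨a, ha⟩
  simpa [hf] using h0

/-- Elements of the tensor product with a module killed by `r` are killed by `r`. -/
lemma smul_tensor_eq_zero (X : Type*) [AddCommGroup X] [Module R X] (r : R)
    (h : ∀ x : X, r • x = 0) (v : M ⊗[R] X) : r • v = 0 := by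
  induction v using TensorProduct.induction_on with
  | zero => exact smul_zero r
  | tmul m x => rw [← tmul_smul, h x, tmul_zero]
  | add u w hu hw => rw [smul_add, hu, hw, add_zero]

lemma tensor_eq_zero_of_subsingleton {X : Type*} [AddCommGroup X] [Module R X]
    [Subsingleton X] (v : M ⊗[R] X) : v = 0 := by
  induction v using TensorProduct.induction_on with
  | zero => rfl
  | tmul m x => rw [Subsingleton.elim x 0, tmul_zero]
  | add u w hu hw => rw [hu, hw, add_zero]

end TensorAux

end SKPAux

open SKPAux

set_option maxHeartbeats 1000000 in
theorem stmt_15 {R S : Type*} [CommRing R] [CommRing S] [Algebra R S] [IsNoetherianRing R]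
    (L : Type*) [AddCommGroup L] [Module R L] [Module.Finite R L]
    (M : Type*) [AddCommGroup M] [Module S M] [Module R M] [IsScalarTower R S M]
    [Module.Flat R M] (Q : Ideal S) :
    IsStrongKrullPrime S (M ⊗[R] L) Q ↔
      ∃ p ∈ associatedPrimes R L,
        IsStrongKrullPrime S (M ⧸ (p.map (algebraMap R S) • (⊤ : Submodule S M))) Q := by
  classical
  constructor
  · -- forward direction
    intro h
    have hQprime : Q.IsPrime := h.1
    by_contra hcon
    push_neg at hcon
    have fail : ∀ p, p ∈ associatedPrimes R L → ∃ Jp : Ideal S, Jp.FG ∧ Jp ≤ Q ∧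
        ∀ w : M ⧸ (p.map (algebraMap R S) • (⊤ : Submodule S M)),
          Jp ≤ ann S w → ¬ ann S w ≤ Q := by
      intro p hp
      have hnk := hcon p hp
      rw [IsStrongKrullPrime, not_and] at hnk
      have h2 := hnk hQprime
      push_neg at h2
      exact h2
    choose! JJ hJJfg hJJQ hJJw using fail
    -- trivial case
    by_cases hL : Subsingleton L
    · obtain ⟨z, hz1, hz2⟩ := h.2 ⊥ Submodule.fg_bot bot_le
      haveI := hL
      have hz0 : z = 0 := tensor_eq_zero_of_subsingleton z
      apply hQprime.ne_top
      rw [eq_top_iff]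
      intro s _
      exact hz2 (by rw [LinearMap.mem_ker, LinearMap.toSpanSingleton_apply, hz0, smul_zero])
    haveI : Nontrivial L := not_subsingleton_iff_nontrivial.mp hL
    haveI : IsNoetherian R L := isNoetherian_of_isNoetherianRing_of_finite R L
    obtain ⟨s0, hs0inf, hs0irr⟩ := exists_infIrred_decomposition (⊥ : Submodule R L)
    have hTfin : {u : Finset (Submodule R L) | u ⊆ s0 ∧ u.inf id = ⊥}.Finite :=
      Set.Finite.subset s0.powerset.finite_toSet fun u hu => Finset.mem_powerset.mpr hu.1
    obtain ⟨t, ⟨hts0, htinf⟩, htmin⟩ :=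
      (by
        obtain ⟨t, ht1, ht2⟩ := Set.Finite.exists_minimalFor id _ hTfin ⟨s0, subset_rfl, hs0inf⟩
        exact ⟨t, ht1, fun u hu h => le_antisymm (ht2 hu h) h⟩ :
        ∃ t ∈ {u : Finset (Submodule R L) | u ⊆ s0 ∧ u.inf id = ⊥},
          ∀ u ∈ {u : Finset (Submodule R L) | u ⊆ s0 ∧ u.inf id = ⊥}, id u ≤ id t → id t = id u)
    -- choose primes for each member of t
    have key : ∀ N ∈ t, ∃ p, p ∈ associatedPrimes R L ∧ associatedPrimes R (L ⧸ N) ⊆ {p} := by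
      intro N hN
      have hKinf : (t.erase N).inf id ⊓ N = ⊥ := by
        rw [← htinf]
        conv_rhs => rw [← Finset.insert_erase hN]
        rw [Finset.inf_insert]
        exact inf_comm _ _
      have hKne : (t.erase N).inf id ≠ ⊥ := by
        intro hbot
        have hmem : t.erase N ∈ {u : Finset (Submodule R L) | u ⊆ s0 ∧ u.inf id = ⊥} :=
          ⟨(Finset.erase_subset _ _).trans hts0, hbot⟩
        have heq := htmin _ hmem (Finset.erase_subset N t)
        simp only [id] at heq
        exact Finset.notMem_erase N t (heq ▸ hN)
      set K := (t.erase N).inf id with hK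
      haveI : Nontrivial ↥K := Submodule.nontrivial_iff_ne_bot.mpr hKne
      set g : ↥K →ₗ[R] L ⧸ N := N.mkQ.comp K.subtype with hgdef
      have hg : Function.Injective g := by
        rw [← LinearMap.ker_eq_bot, eq_bot_iff]
        intro y hy
        rw [LinearMap.mem_ker, hgdef, LinearMap.comp_apply, Submodule.coe_subtype,
          Submodule.mkQ_apply, Submodule.Quotient.mk_eq_zero] at hy
        have : (y : L) ∈ K ⊓ N := ⟨y.2, hy⟩
        rw [hKinf] at this
        simp only [Submodule.mem_bot] at this ⊢
        exact Subtype.ext this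
      obtain ⟨p, hp⟩ := associatedPrimes.nonempty R ↥K
      refine ⟨p, associatedPrimes.subset_of_injective
        (Submodule.injective_subtype K) hp, fun q hq => ?_⟩
      have hsub := assPrimes_subsingleton_of_infIrred (hs0irr (hts0 hN))
      have hpq : p ∈ associatedPrimes R (L ⧸ N) :=
        associatedPrimes.subset_of_injective hg hp
      exact hsub hq hpq
    choose! P hPassL hPassQuot using key
    set T' := t.filter (fun N => (P N).map (algebraMap R S) ≤ Q) with hT'
    set J : Ideal S := T'.sup (fun N => JJ (P N) ⊔ (P N).map (algebraMap R S)) with hJdef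
    have hJfg : J.FG :=
      Submodule.fg_finset_sup _ _ fun N hN =>
        Submodule.FG.sup (hJJfg _ (hPassL N (Finset.mem_of_mem_filter N hN)))
          (Ideal.FG.map (IsNoetherian.noetherian (P N)) _)
    have hJQ : J ≤ Q := Finset.sup_le fun N hN =>
      sup_le (hJJQ _ (hPassL N (Finset.mem_of_mem_filter N hN))) ((Finset.mem_filter.1 hN).2)
    obtain ⟨z, hzJ, hzQ⟩ := h.2 J hJfg hJQ
    have hzJ' : J ≤ ann S z := hzJ
    -- choose N₀ with small annihilator of the component
    have hexists : ∃ N : ↥t, ann S ((AlgebraTensorModule.map (LinearMap.id : M →ₗ[S] M)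
        (N : Submodule R L).mkQ) z) ≤ Q := by
      apply exists_le_prime_of_forall hQprime
      intro x hx
      have hxz : x • z = 0 := by
        apply eq_zero_of_forall_lTensor (M := M) (fun N : ↥t => (N : Submodule R L).mkQ)
        · refine le_antisymm ?_ bot_le
          simp only [Submodule.ker_mkQ]
          rw [← htinf]
          exact Finset.le_inf fun b hb => iInf_le_of_le ⟨b, hb⟩ le_rfl
        · intro N
          have hxm := mem_ann_iff.mp (hx N)
          rw [← coe_map_id_eq (S := S) L (L ⧸ (N : Submodule R L)) (N : Submodule R L).mkQ,
            map_smul]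
          exact hxm
      exact hzQ (by rw [LinearMap.mem_ker, LinearMap.toSpanSingleton_apply]; exact hxz)
    obtain ⟨N₀, hN₀Q⟩ := hexists
    set X := L ⧸ (N₀ : Submodule R L) with hX
    set z₀ := (AlgebraTensorModule.map (LinearMap.id : M →ₗ[S] M)
      (N₀ : Submodule R L).mkQ) z with hz₀
    set p := P N₀ with hpdef
    have hassX : associatedPrimes R X ⊆ {p} := hPassQuot N₀ N₀.2
    have hPmem : p ∈ associatedPrimes R L := hPassL N₀ N₀.2
    haveI hpprime : p.IsPrime := hPmem.isPrime
    have hzz₀ : ann S z ≤ ann S z₀ := ann_le_ann_map _ z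
    -- step a: the image of p is contained in Q
    have hstepa : p.map (algebraMap R S) ≤ Q := by
      rw [Ideal.map_le_iff_le_comap]
      intro a ha
      obtain ⟨k, hk⟩ := exists_pow_smul_eq_zero X a (fun q hq => by
        rw [Set.mem_singleton_iff.mp (hassX hq)]; exact ha)
      have hkill : (algebraMap R S a) ^ (k + 1) • z₀ = 0 := by
        rw [← map_pow, algebraMap_smul]
        refine smul_tensor_eq_zero (M := M) X _ (fun x => ?_) z₀
        rw [pow_succ', mul_smul, hk x, smul_zero]
      have hin : (algebraMap R S a) ^ (k + 1) ∈ Q := hN₀Q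
        (by rw [LinearMap.mem_ker, LinearMap.toSpanSingleton_apply]; exact hkill)
      exact Ideal.mem_comap.mpr ((hQprime.pow_mem_iff_mem (k + 1) (Nat.succ_pos k)).1 hin)
    have hN₀T' : (N₀ : Submodule R L) ∈ T' := Finset.mem_filter.2 ⟨N₀.2, hstepa⟩
    have hJle : JJ p ⊔ p.map (algebraMap R S) ≤ ann S z₀ :=
      le_trans (Finset.le_sup (f := fun N => JJ (P N) ⊔ (P N).map (algebraMap R S)) hN₀T')
        (le_trans hzJ' hzz₀)
    have hJJle : JJ p ≤ ann S z₀ := le_trans le_sup_left hJle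
    have hpkill : ∀ a ∈ p, a • z₀ = 0 := by
      intro a ha
      have hm : algebraMap R S a ∈ ann S z₀ :=
        hJle (le_sup_right (a := JJ p) (Ideal.mem_map_of_mem _ ha))
      rw [mem_ann_iff] at hm
      rwa [algebraMap_smul] at hm
    -- the joint kernel Y
    obtain ⟨G, hG⟩ := IsNoetherian.noetherian p
    obtain ⟨Y, hYkillG, y₀, hy₀⟩ := exists_preimage_of_smul_eq_zero (M := M) X G z₀
      (fun a haG => hpkill a (by rw [← hG]; exact Submodule.subset_span haG))
    set ΦY : M ⊗[R] ↥Y →ₗ[S] M ⊗[R] X :=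
      AlgebraTensorModule.map (LinearMap.id : M →ₗ[S] M) Y.subtype with hΦYdef
    have hΦYz : ΦY y₀ = z₀ := by
      rw [hΦYdef]
      rw [show ⇑(AlgebraTensorModule.map (LinearMap.id : M →ₗ[S] M) Y.subtype)
        = ⇑(LinearMap.lTensor M Y.subtype) from coe_map_id_eq _ _ _]
      exact hy₀
    have hΦYinj : Function.Injective ΦY := by
      rw [hΦYdef, show ⇑(AlgebraTensorModule.map (LinearMap.id : M →ₗ[S] M) Y.subtype)
        = ⇑(LinearMap.lTensor M Y.subtype) from coe_map_id_eq _ _ _]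
      exact Module.Flat.lTensor_preserves_injective_linearMap _ (Submodule.injective_subtype Y)
    have hanny₀ : ann S y₀ = ann S z₀ := by
      rw [← hΦYz, ann_map_eq_of_injective ΦY hΦYinj]
    -- Y is killed by p
    have hYkill : ∀ a ∈ p, ∀ y : ↥Y, a • (y : X) = 0 := by
      intro a ha y
      rw [← hG] at ha
      induction ha using Submodule.span_induction with
      | mem b hb => exact hYkillG b hb y
      | zero => rw [zero_smul]
      | add b c _ _ hb hc => rw [add_smul, hb, hc, add_zero]
      | smul c b _ hb => rw [smul_eq_mul, mul_smul, hb, smul_zero]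
    -- torsion-freeness
    have htf : ∀ (a : R), a ∉ p → ∀ x : X, a • x = 0 → x = 0 := by
      intro a ha x hax
      by_contra hx
      obtain ⟨Pq, hPq, hle⟩ := exists_le_isAssociatedPrime_of_isNoetherianRing R x hx
      have hPqp : Pq = p := Set.mem_singleton_iff.mp (hassX hPq)
      apply ha
      rw [← hPqp]
      exact hle (by rw [Submodule.bot_colon']; exact (Submodule.mem_annihilator_span_singleton x a).mpr hax)
    have hTor : Module.IsTorsionBySet R ↥Y (p : Set R) := by
      intro y a
      have := hYkill a a.2 y
      exact Subtype.ext (by simpa using this)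
    letI : Module (R ⧸ p) ↥Y := hTor.module
    haveI : IsScalarTower R (R ⧸ p) ↥Y := hTor.isScalarTower
    haveI : Module.Finite R ↥Y := by
      haveI : IsNoetherian R X := isNoetherian_of_isNoetherianRing_of_finite R X
      exact Module.Finite.iff_fg.mpr (IsNoetherian.noetherian Y)
    haveI : Module.Finite (R ⧸ p) ↥Y := Module.Finite.of_restrictScalars_finite R (R ⧸ p) ↥Y
    haveI : NoZeroSMulDivisors (R ⧸ p) ↥Y := by
      refine ⟨fun {c} {y} hcy => ?_⟩
      obtain ⟨a, rfl⟩ := Ideal.Quotient.mk_surjective c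
      by_cases hap : a ∈ p
      · exact Or.inl (Ideal.Quotient.eq_zero_iff_mem.mpr hap)
      · right
        have h1 : a • y = 0 := by
          have hmk : (Ideal.Quotient.mk p a) • y = a • y :=
            Module.IsTorsionBySet.mk_smul hTor a y
          rw [← hmk, hcy]
        have h2 : a • (y : X) = 0 := by
          have := congrArg Subtype.val h1
          simpa using this
        exact Subtype.ext (by simpa using htf a hap _ h2)
    haveI : IsDomain (R ⧸ p) := Ideal.Quotient.isDomain p
    obtain ⟨n, θ, hθ⟩ := exists_embedding_into_free (D := R ⧸ p) (V := ↥Y)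
    set θR : ↥Y →ₗ[R] (Fin n → R ⧸ p) := LinearMap.restrictScalars R θ with hθRdef
    set gk : Fin n → (↥Y →ₗ[R] R ⧸ p) := fun k => (LinearMap.proj k).comp θR with hgkdef
    have hkerg : (⨅ k, LinearMap.ker (gk k)) = ⊥ := by
      rw [eq_bot_iff]
      intro y hy
      simp only [Submodule.mem_iInf, LinearMap.mem_ker, hgkdef, LinearMap.comp_apply,
        LinearMap.proj_apply] at hy
      have hθy : θ y = 0 := funext hy
      simp only [Submodule.mem_bot]
      exact hθ (by rw [hθy, map_zero])
    have hexistsk : ∃ k, ann S ((AlgebraTensorModule.map (LinearMap.id : M →ₗ[S] M)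
        (gk k)) y₀) ≤ Q := by
      apply exists_le_prime_of_forall hQprime
      intro x hx
      have hxy : x • y₀ = 0 := by
        apply eq_zero_of_forall_lTensor (M := M) gk hkerg
        intro k
        have hxm := mem_ann_iff.mp (hx k)
        rw [← coe_map_id_eq (S := S) _ _ (gk k), map_smul]
        exact hxm
      have hxa : x ∈ ann S y₀ := mem_ann_iff.mpr hxy
      rw [hanny₀] at hxa
      exact hN₀Q hxa
    obtain ⟨k₀, hk₀⟩ := hexistsk
    set w₁ := (AlgebraTensorModule.map (LinearMap.id : M →ₗ[S] M) (gk k₀)) y₀ with hw₁def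
    have hJw₁ : JJ p ≤ ann S w₁ := by
      refine le_trans hJJle ?_
      rw [← hanny₀]
      exact ann_le_ann_map _ y₀
    obtain ⟨m₁, hm₁⟩ := toTensorQuot_surjective (S := S) (M := M) p w₁
    have hannw : ann S (Submodule.Quotient.mk m₁ :
        M ⧸ (p.map (algebraMap R S) • (⊤ : Submodule S M))) = ann S w₁ := by
      rw [ann_quotient_eq_ann_tensor, hm₁]
    exact hJJw p hPmem _ (by rw [hannw]; exact hJw₁) (by rw [hannw]; exact hk₀)
  · -- reverse direction
    rintro ⟨p, hp, hQp⟩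
    obtain ⟨hpprime, x, hx⟩ := isAssociatedPrime_iff.1 hp
    rw [Submodule.bot_colon'] at hx
    have hker : p ≤ LinearMap.ker (LinearMap.toSpanSingleton R L x) := by
      intro a ha
      rw [LinearMap.mem_ker, LinearMap.toSpanSingleton_apply]
      have : a ∈ (R ∙ x).annihilator := hx ▸ ha
      rwa [Submodule.mem_annihilator_span_singleton] at this
    set ι' : (R ⧸ p) →ₗ[R] L := Submodule.liftQ p (LinearMap.toSpanSingleton R L x) hker
      with hι'def
    have hι' : Function.Injective ι' := by
      rw [← LinearMap.ker_eq_bot, hι'def]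
      refine Submodule.ker_liftQ_eq_bot p _ hker (fun b hb => ?_)
      rw [LinearMap.mem_ker, LinearMap.toSpanSingleton_apply] at hb
      rw [hx]
      exact (Submodule.mem_annihilator_span_singleton x b).mpr hb
    set Ψ := AlgebraTensorModule.map (LinearMap.id : M →ₗ[S] M) ι' with hΨdef
    have hΨinj : Function.Injective Ψ := by
      rw [hΨdef, show ⇑(AlgebraTensorModule.map (LinearMap.id : M →ₗ[S] M) ι')
        = ⇑(LinearMap.lTensor M ι') from coe_map_id_eq _ _ _]
      exact Module.Flat.lTensor_preserves_injective_linearMap ι' hι'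
    refine ⟨hQp.1, fun I hIfg hIQ => ?_⟩
    obtain ⟨w, hw1, hw2⟩ := hQp.2 I hIfg hIQ
    obtain ⟨m, rfl⟩ := Submodule.Quotient.mk_surjective _ w
    have heq : ann S (Ψ (toTensorQuot (S := S) M p m)) =
        ann S (Submodule.Quotient.mk m :
          M ⧸ (p.map (algebraMap R S) • (⊤ : Submodule S M))) := by
      rw [ann_map_eq_of_injective Ψ hΨinj, ← ann_quotient_eq_ann_tensor]
    exact ⟨Ψ (toTensorQuot (S := S) M p m), hw1.trans heq.symm.le, heq.le.trans hw2⟩
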